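/- With density expressed via Bernoulli's law as rho = ((gamma-1)/(gamma K))^{1/(gamma-1)} (B - |U|^2/2)^{1/(gamma-1)}, the continuity equation in spherical projection coordinates, namely d/dz1 (rho U1) + ((1+|z'|^2)/(2z1)) (d/dz2 (rho U2) + d/dz3 (rho U3)) + (2/z1) rho U1 - (rho/z1)(z2 U2 + z3 U3) = 0, is equivalent (assuming B and K are constant along the flow, i.e., the transport equations for B and K hold) to the deformation equation: (c^2 - U1^2) d(U1)/dz1 + ((1+|z'|^2)/(2z1)) c^2 (d(U2)/dz2 + d(U3)/dz3) + (c^2/z1)(2 U1 - z2 U2 - z3 U3) = U1 sum_{j=2,3} Uj d(Uj)/dz1 + ((1+|z'|^2)/(2z1)) sum_{j=2,3} sum_{i=1,2,3} Uj Ui d(Ui)/dzj, where c^2 = (gamma-1)(B - |U|^2/2). -/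

import Mathlib

noncomputable section

/-- Directional (partial) derivative of a function on `ℝ³`. -/
def pd (v : ℝ × ℝ × ℝ) (f : ℝ × ℝ × ℝ → ℝ) (p : ℝ × ℝ × ℝ) : ℝ := fderiv ℝ f p v

/-- The density determined from `B, K, |U|²` via Bernoulli's law. -/
def bernoulliDensity (γ : ℝ) (U1 U2 U3 B K : ℝ × ℝ × ℝ → ℝ) (z : ℝ × ℝ × ℝ) : ℝ :=
  ((γ - 1) / (γ * K z)) ^ (1 / (γ - 1)) *
    (B z - (U1 z ^ 2 + U2 z ^ 2 + U3 z ^ 2) / 2) ^ (1 / (γ - 1))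

private lemma pd_mul {f g : ℝ × ℝ × ℝ → ℝ} {p : ℝ × ℝ × ℝ} (v : ℝ × ℝ × ℝ)
    (hf : DifferentiableAt ℝ f p) (hg : DifferentiableAt ℝ g p) :
    pd v (fun w => f w * g w) p = pd v f p * g p + f p * pd v g p := by
  unfold pd
  rw [fderiv_fun_mul hf hg]
  simp only [ContinuousLinearMap.add_apply, ContinuousLinearMap.smul_apply, smul_eq_mul]
  ring

private lemma pd_const_mul {f : ℝ × ℝ × ℝ → ℝ} {p : ℝ × ℝ × ℝ} (v : ℝ × ℝ × ℝ) (c : ℝ)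
    (hf : DifferentiableAt ℝ f p) :
    pd v (fun w => c * f w) p = c * pd v f p := by
  unfold pd
  rw [fderiv_const_mul hf]
  simp

private lemma pd_rpow_const {f : ℝ × ℝ × ℝ → ℝ} {p : ℝ × ℝ × ℝ} {c : ℝ} (v : ℝ × ℝ × ℝ)
    (hf : DifferentiableAt ℝ f p) (h0 : f p ≠ 0) :
    pd v (fun w => f w ^ c) p = c * f p ^ (c - 1) * pd v f p := by
  unfold pd
  rw [(hf.hasFDerivAt.rpow_const (Or.inl h0)).fderiv]
  simp only [ContinuousLinearMap.smul_apply, smul_eq_mul]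

private lemma pd_q {U1 U2 U3 B : ℝ × ℝ × ℝ → ℝ} {p : ℝ × ℝ × ℝ} (v : ℝ × ℝ × ℝ)
    (h1 : DifferentiableAt ℝ U1 p) (h2 : DifferentiableAt ℝ U2 p)
    (h3 : DifferentiableAt ℝ U3 p) (hB : DifferentiableAt ℝ B p) :
    pd v (fun w => B w - (U1 w ^ 2 + U2 w ^ 2 + U3 w ^ 2) / 2) p
      = pd v B p - (U1 p * pd v U1 p + U2 p * pd v U2 p + U3 p * pd v U3 p) := by
  unfold pd
  have hfe : (fun w => B w - (U1 w ^ 2 + U2 w ^ 2 + U3 w ^ 2) / 2)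
      = fun w => B w - (U1 w * U1 w + U2 w * U2 w + U3 w * U3 w) * (2:ℝ)⁻¹ := by
    funext w; ring
  rw [hfe, (hB.hasFDerivAt.fun_sub ((((h1.hasFDerivAt.fun_mul h1.hasFDerivAt).fun_add
      (h2.hasFDerivAt.fun_mul h2.hasFDerivAt)).fun_add
      (h3.hasFDerivAt.fun_mul h3.hasFDerivAt)).mul_const ((2:ℝ)⁻¹))).fderiv]
  simp only [ContinuousLinearMap.sub_apply, ContinuousLinearMap.add_apply,
    ContinuousLinearMap.smul_apply, smul_eq_mul, ContinuousLinearMap.coe_smul',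
    Pi.smul_apply]
  ring

private lemma qdiff {U1 U2 U3 B : ℝ × ℝ × ℝ → ℝ} {p : ℝ × ℝ × ℝ}
    (h1 : DifferentiableAt ℝ U1 p) (h2 : DifferentiableAt ℝ U2 p)
    (h3 : DifferentiableAt ℝ U3 p) (hB : DifferentiableAt ℝ B p) :
    DifferentiableAt ℝ (fun w => B w - (U1 w ^ 2 + U2 w ^ 2 + U3 w ^ 2) / 2) p := by
  have hfe : (fun w => B w - (U1 w ^ 2 + U2 w ^ 2 + U3 w ^ 2) / 2)
      = fun w => B w - (U1 w * U1 w + U2 w * U2 w + U3 w * U3 w) * (2:ℝ)⁻¹ := by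
    funext w; ring
  rw [hfe]
  exact hB.sub ((((h1.mul h1).add (h2.mul h2)).add (h3.mul h3)).mul_const _)

private lemma rho_eventuallyEq {γ : ℝ} (hγ : 1 < γ) {U1 U2 U3 B K : ℝ × ℝ × ℝ → ℝ}
    {p : ℝ × ℝ × ℝ} (hKc : ContinuousAt K p) (hKp : 0 < K p) :
    bernoulliDensity γ U1 U2 U3 B K =ᶠ[nhds p]
      fun w => ((γ - 1) / γ) ^ (1 / (γ - 1)) *
        (K w ^ (-(1 / (γ - 1))) *
          (B w - (U1 w ^ 2 + U2 w ^ 2 + U3 w ^ 2) / 2) ^ (1 / (γ - 1))) := by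
  have hev : ∀ᶠ w in nhds p, 0 < K w := hKc.eventually (eventually_gt_nhds hKp)
  filter_upwards [hev] with w hw
  unfold bernoulliDensity
  have hγ0 : (0:ℝ) < γ := by linarith
  have h1 : (γ - 1) / (γ * K w) = ((γ - 1) / γ) / K w := by
    rw [div_div]
  rw [h1, Real.div_rpow (div_nonneg (by linarith) (by linarith)) hw.le, Real.rpow_neg hw.le, div_eq_mul_inv]
  ring

private lemma rho_diff {γ : ℝ} (hγ : 1 < γ) {U1 U2 U3 B K : ℝ × ℝ × ℝ → ℝ} {p : ℝ × ℝ × ℝ}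
    (h1 : DifferentiableAt ℝ U1 p) (h2 : DifferentiableAt ℝ U2 p) (h3 : DifferentiableAt ℝ U3 p)
    (hB : DifferentiableAt ℝ B p) (hK : DifferentiableAt ℝ K p)
    (hKp : 0 < K p) (hqp : 0 < B p - (U1 p ^ 2 + U2 p ^ 2 + U3 p ^ 2) / 2) :
    DifferentiableAt ℝ (bernoulliDensity γ U1 U2 U3 B K) p := by
  rw [(rho_eventuallyEq hγ (U1 := U1) (U2 := U2) (U3 := U3) (B := B)
      hK.continuousAt hKp).differentiableAt_iff]
  exact ((hK.rpow_const (Or.inl hKp.ne')).mul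
    ((qdiff h1 h2 h3 hB).rpow_const (Or.inl hqp.ne'))).const_mul _

private lemma pd_rho {γ : ℝ} (hγ : 1 < γ) {U1 U2 U3 B K : ℝ × ℝ × ℝ → ℝ} {p : ℝ × ℝ × ℝ}
    (v : ℝ × ℝ × ℝ)
    (h1 : DifferentiableAt ℝ U1 p) (h2 : DifferentiableAt ℝ U2 p) (h3 : DifferentiableAt ℝ U3 p)
    (hB : DifferentiableAt ℝ B p) (hK : DifferentiableAt ℝ K p)
    (hKp : 0 < K p) (hqp : 0 < B p - (U1 p ^ 2 + U2 p ^ 2 + U3 p ^ 2) / 2) :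
    pd v (bernoulliDensity γ U1 U2 U3 B K) p
      = bernoulliDensity γ U1 U2 U3 B K p * (1 / (γ - 1)) *
          ((pd v B p - (U1 p * pd v U1 p + U2 p * pd v U2 p + U3 p * pd v U3 p))
              / (B p - (U1 p ^ 2 + U2 p ^ 2 + U3 p ^ 2) / 2)
            - pd v K p / K p) := by
  have heq := rho_eventuallyEq hγ (U1 := U1) (U2 := U2) (U3 := U3) (B := B) hK.continuousAt hKp
  have hKne : K p ≠ 0 := hKp.ne'
  have hqne : (B p - (U1 p ^ 2 + U2 p ^ 2 + U3 p ^ 2) / 2) ≠ 0 := hqp.ne'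
  have hqd := qdiff h1 h2 h3 hB
  have hpd : pd v (bernoulliDensity γ U1 U2 U3 B K) p
      = pd v (fun w => ((γ - 1) / γ) ^ (1 / (γ - 1)) *
          (K w ^ (-(1 / (γ - 1))) *
            (B w - (U1 w ^ 2 + U2 w ^ 2 + U3 w ^ 2) / 2) ^ (1 / (γ - 1)))) p := by
    unfold pd; rw [heq.fderiv_eq]
  rw [hpd, pd_const_mul v _ ((hK.rpow_const (Or.inl hKne)).fun_mul (hqd.rpow_const (Or.inl hqne))),
    pd_mul v (hK.rpow_const (Or.inl hKne)) (hqd.rpow_const (Or.inl hqne)),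
    pd_rpow_const v hK hKne, pd_rpow_const v hqd hqne, pd_q v h1 h2 h3 hB,
    heq.eq_of_nhds, Real.rpow_sub hKp, Real.rpow_sub hqp, Real.rpow_one, Real.rpow_one]
  ring

/-- with the density given by Bernoulli's law, and assuming the transport
equations for `B` and `K`, the continuity equation in spherical projection coordinates is
equivalent to the deformation (first deformation-curl) equation. -/
theorem continuity_iff_deformation (γ : ℝ) (hγ : 1 < γ)
    (D : Set (ℝ × ℝ × ℝ)) (hD : IsOpen D) (hDz : ∀ z ∈ D, 0 < z.1)
    (U1 U2 U3 B K : ℝ × ℝ × ℝ → ℝ)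
    (hU1 : ContDiffOn ℝ 1 U1 D) (hU2 : ContDiffOn ℝ 1 U2 D) (hU3 : ContDiffOn ℝ 1 U3 D)
    (hB : ContDiffOn ℝ 1 B D) (hK : ContDiffOn ℝ 1 K D)
    (hKpos : ∀ z ∈ D, 0 < K z)
    (hBq : ∀ z ∈ D, 0 < B z - (U1 z ^ 2 + U2 z ^ 2 + U3 z ^ 2) / 2)
    (htranB : ∀ z ∈ D,
      U1 z * pd (1, 0, 0) B z
        + ((1 + (z.2.1 ^ 2 + z.2.2 ^ 2)) / (2 * z.1)) *
            (U2 z * pd (0, 1, 0) B z + U3 z * pd (0, 0, 1) B z) = 0)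
    (htranK : ∀ z ∈ D,
      U1 z * pd (1, 0, 0) K z
        + ((1 + (z.2.1 ^ 2 + z.2.2 ^ 2)) / (2 * z.1)) *
            (U2 z * pd (0, 1, 0) K z + U3 z * pd (0, 0, 1) K z) = 0) :
    ∀ z ∈ D,
      (pd (1, 0, 0) (fun w => bernoulliDensity γ U1 U2 U3 B K w * U1 w) z
          + ((1 + (z.2.1 ^ 2 + z.2.2 ^ 2)) / (2 * z.1)) *
              (pd (0, 1, 0) (fun w => bernoulliDensity γ U1 U2 U3 B K w * U2 w) z
                + pd (0, 0, 1) (fun w => bernoulliDensity γ U1 U2 U3 B K w * U3 w) z)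
          + (2 / z.1) * bernoulliDensity γ U1 U2 U3 B K z * U1 z
          - (bernoulliDensity γ U1 U2 U3 B K z / z.1) *
              (z.2.1 * U2 z + z.2.2 * U3 z) = 0)
      ↔
      (((γ - 1) * (B z - (U1 z ^ 2 + U2 z ^ 2 + U3 z ^ 2) / 2) - U1 z ^ 2) *
            pd (1, 0, 0) U1 z
          + ((1 + (z.2.1 ^ 2 + z.2.2 ^ 2)) / (2 * z.1)) *
              ((γ - 1) * (B z - (U1 z ^ 2 + U2 z ^ 2 + U3 z ^ 2) / 2)) *
              (pd (0, 1, 0) U2 z + pd (0, 0, 1) U3 z)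
          + ((γ - 1) * (B z - (U1 z ^ 2 + U2 z ^ 2 + U3 z ^ 2) / 2) / z.1) *
              (2 * U1 z - z.2.1 * U2 z - z.2.2 * U3 z)
        = U1 z * (U2 z * pd (1, 0, 0) U2 z + U3 z * pd (1, 0, 0) U3 z)
            + ((1 + (z.2.1 ^ 2 + z.2.2 ^ 2)) / (2 * z.1)) *
                (U2 z * (U1 z * pd (0, 1, 0) U1 z + U2 z * pd (0, 1, 0) U2 z
                      + U3 z * pd (0, 1, 0) U3 z)
                  + U3 z * (U1 z * pd (0, 0, 1) U1 z + U2 z * pd (0, 0, 1) U2 z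
                      + U3 z * pd (0, 0, 1) U3 z))) := by
  intro z hz
  have hz1 : 0 < z.1 := hDz z hz
  have hz1ne : z.1 ≠ 0 := hz1.ne'
  have hmem := hD.mem_nhds hz
  have h1d : DifferentiableAt ℝ U1 z := (hU1.differentiableOn one_ne_zero).differentiableAt hmem
  have h2d : DifferentiableAt ℝ U2 z := (hU2.differentiableOn one_ne_zero).differentiableAt hmem
  have h3d : DifferentiableAt ℝ U3 z := (hU3.differentiableOn one_ne_zero).differentiableAt hmem
  have hBd : DifferentiableAt ℝ B z := (hB.differentiableOn one_ne_zero).differentiableAt hmem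
  have hKd : DifferentiableAt ℝ K z := (hK.differentiableOn one_ne_zero).differentiableAt hmem
  have hKz : 0 < K z := hKpos z hz
  have hqz : 0 < B z - (U1 z ^ 2 + U2 z ^ 2 + U3 z ^ 2) / 2 := hBq z hz
  have hγne : γ - 1 ≠ 0 := sub_ne_zero.mpr (ne_of_gt hγ)
  have hρd := rho_diff hγ h1d h2d h3d hBd hKd hKz hqz
  have hρpos : 0 < bernoulliDensity γ U1 U2 U3 B K z := by
    unfold bernoulliDensity
    exact mul_pos (Real.rpow_pos_of_pos (div_pos (by linarith)
      (mul_pos (by linarith) hKz)) _) (Real.rpow_pos_of_pos hqz _)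
  have htB := htranB z hz
  have htK := htranK z hz
  rw [pd_mul (1,0,0) hρd h1d, pd_mul (0,1,0) hρd h2d, pd_mul (0,0,1) hρd h3d,
    pd_rho hγ (1,0,0) h1d h2d h3d hBd hKd hKz hqz,
    pd_rho hγ (0,1,0) h1d h2d h3d hBd hKd hKz hqz,
    pd_rho hγ (0,0,1) h1d h2d h3d hBd hKd hKz hqz]
  set s := z.2.1 with hs
  set t := z.2.2 with ht
  set r := z.1 with hr
  set a1 := U1 z with ha1
  set a2 := U2 z with ha2
  set a3 := U3 z with ha3
  set b1 := pd (1,0,0) B z with hb1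
  set b2 := pd (0,1,0) B z with hb2
  set b3 := pd (0,0,1) B z with hb3
  set k1 := pd (1,0,0) K z with hk1
  set k2 := pd (0,1,0) K z with hk2
  set k3 := pd (0,0,1) K z with hk3
  set d11 := pd (1,0,0) U1 z with hd11
  set d12 := pd (1,0,0) U2 z with hd12
  set d13 := pd (1,0,0) U3 z with hd13
  set d21 := pd (0,1,0) U1 z with hd21
  set d22 := pd (0,1,0) U2 z with hd22
  set d23 := pd (0,1,0) U3 z with hd23
  set d31 := pd (0,0,1) U1 z with hd31
  set d32 := pd (0,0,1) U2 z with hd32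
  set d33 := pd (0,0,1) U3 z with hd33
  set kz := K z with hkz
  set Q := B z - (a1 ^ 2 + a2 ^ 2 + a3 ^ 2) / 2 with hQ
  set R := bernoulliDensity γ U1 U2 U3 B K z with hR
  have hX : a1 * (b1 - (a1 * d11 + a2 * d12 + a3 * d13)) + (1 + (s ^ 2 + t ^ 2)) / (2 * r) * (a2 * (b2 - (a1 * d21 + a2 * d22 + a3 * d23)) + a3 * (b3 - (a1 * d31 + a2 * d32 + a3 * d33))) = -(a1 * (a1 * d11 + a2 * d12 + a3 * d13) + (1 + (s ^ 2 + t ^ 2)) / (2 * r) * (a2 * (a1 * d21 + a2 * d22 + a3 * d23) + a3 * (a1 * d31 + a2 * d32 + a3 * d33))) := by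
    linear_combination htB
  have step1 : R * (1 / (γ - 1)) * ((b1 - (a1 * d11 + a2 * d12 + a3 * d13)) / Q - k1 / kz) * a1 + R * d11 + (1 + (s ^ 2 + t ^ 2)) / (2 * r) * (R * (1 / (γ - 1)) * ((b2 - (a1 * d21 + a2 * d22 + a3 * d23)) / Q - k2 / kz) * a2 + R * d22 + (R * (1 / (γ - 1)) * ((b3 - (a1 * d31 + a2 * d32 + a3 * d33)) / Q - k3 / kz) * a3 + R * d33)) + 2 / r * R * a1 - R / r * (s * a2 + t * a3) = R * ((d11 + (1 + (s ^ 2 + t ^ 2)) / (2 * r) * (d22 + d33) + (2 * a1 - s * a2 - t * a3) / r) - 1 / (γ - 1) * (a1 * (a1 * d11 + a2 * d12 + a3 * d13) + (1 + (s ^ 2 + t ^ 2)) / (2 * r) * (a2 * (a1 * d21 + a2 * d22 + a3 * d23) + a3 * (a1 * d31 + a2 * d32 + a3 * d33))) / Q) := by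
    linear_combination (R * (1 / (γ - 1)) / Q) * hX - (R * (1 / (γ - 1)) / kz) * htK
  rw [step1]
  have hgg : (γ - 1) * (1 / (γ - 1)) = 1 := mul_one_div_cancel hγne
  constructor
  · intro h
    have h3 : (d11 + (1 + (s ^ 2 + t ^ 2)) / (2 * r) * (d22 + d33) + (2 * a1 - s * a2 - t * a3) / r) - 1 / (γ - 1) * (a1 * (a1 * d11 + a2 * d12 + a3 * d13) + (1 + (s ^ 2 + t ^ 2)) / (2 * r) * (a2 * (a1 * d21 + a2 * d22 + a3 * d23) + a3 * (a1 * d31 + a2 * d32 + a3 * d33))) / Q = 0 := by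
      rcases mul_eq_zero.mp h with h' | h'
      · exact absurd h' hρpos.ne'
      · exact h'
    have h4 : (d11 + (1 + (s ^ 2 + t ^ 2)) / (2 * r) * (d22 + d33) + (2 * a1 - s * a2 - t * a3) / r) * Q = 1 / (γ - 1) * (a1 * (a1 * d11 + a2 * d12 + a3 * d13) + (1 + (s ^ 2 + t ^ 2)) / (2 * r) * (a2 * (a1 * d21 + a2 * d22 + a3 * d23) + a3 * (a1 * d31 + a2 * d32 + a3 * d33))) := by
      have h5 := sub_eq_zero.mp h3
      rw [eq_div_iff hqz.ne'] at h5
      exact h5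
    linear_combination (γ - 1) * h4 + (a1 * (a1 * d11 + a2 * d12 + a3 * d13) + (1 + (s ^ 2 + t ^ 2)) / (2 * r) * (a2 * (a1 * d21 + a2 * d22 + a3 * d23) + a3 * (a1 * d31 + a2 * d32 + a3 * d33))) * hgg
  · intro h
    have h4 : (d11 + (1 + (s ^ 2 + t ^ 2)) / (2 * r) * (d22 + d33) + (2 * a1 - s * a2 - t * a3) / r) * Q = 1 / (γ - 1) * (a1 * (a1 * d11 + a2 * d12 + a3 * d13) + (1 + (s ^ 2 + t ^ 2)) / (2 * r) * (a2 * (a1 * d21 + a2 * d22 + a3 * d23) + a3 * (a1 * d31 + a2 * d32 + a3 * d33))) := by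
      linear_combination (1 / (γ - 1)) * h - (Q * (d11 + (1 + (s ^ 2 + t ^ 2)) / (2 * r) * (d22 + d33) + (2 * a1 - s * a2 - t * a3) / r)) * hgg
    have h3 : (d11 + (1 + (s ^ 2 + t ^ 2)) / (2 * r) * (d22 + d33) + (2 * a1 - s * a2 - t * a3) / r) - 1 / (γ - 1) * (a1 * (a1 * d11 + a2 * d12 + a3 * d13) + (1 + (s ^ 2 + t ^ 2)) / (2 * r) * (a2 * (a1 * d21 + a2 * d22 + a3 * d23) + a3 * (a1 * d31 + a2 * d32 + a3 * d33))) / Q = 0 := by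
      rw [sub_eq_zero, eq_div_iff hqz.ne']
      exact h4
    rw [h3, mul_zero]
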